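/- arXiv:2605.03080 — 3 statements merged into one kernel-verified Lean document; each statement's English description precedes it below -/
import Mathlib

section
/- Let ε > 0 and τ > 0, define K_{τ,ε}(r) = ε + τ · log(1 + exp(r/τ)), and set h(r) = log K_{τ,ε}(r). Then h is twice differentiable on ℝ, and its derivatives are uniformly bounded: |h'(r)| ≤ 1/ε for all r ∈ ℝ, and |h''(r)| ≤ 1/(4τε) + 1/ε² for all r ∈ ℝ. -/
/-- For `ε, τ > 0`, let `K_{τ,ε}(r) = ε + τ · log(1 + exp(r/τ))` and
`h = log ∘ K_{τ,ε}`. Then `h` is twice differentiable on `ℝ` with uniformly bounded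
derivatives: `|h'(r)| ≤ 1/ε` and `|h''(r)| ≤ 1/(4τε) + 1/ε²` for all `r`. -/
theorem log_softplus_regularizer_derivative_bounds
    (ε τ : ℝ) (hε : 0 < ε) (hτ : 0 < τ)
    (K h : ℝ → ℝ)
    (hK : ∀ r : ℝ, K r = ε + τ * Real.log (1 + Real.exp (r / τ)))
    (hh : ∀ r : ℝ, h r = Real.log (K r)) :
    ∀ r : ℝ,
      DifferentiableAt ℝ h r ∧
      DifferentiableAt ℝ (deriv h) r ∧
      |deriv h r| ≤ 1 / ε ∧
      |deriv (deriv h) r| ≤ 1 / (4 * τ * ε) + 1 / ε ^ 2 := by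
  have hKfun : K = fun r => ε + τ * Real.log (1 + Real.exp (r / τ)) := funext hK
  have hhfun : h = fun r => Real.log (K r) := funext hh
  subst hKfun hhfun
  set N : ℝ → ℝ := fun r => Real.exp (r / τ) / (1 + Real.exp (r / τ)) with hNdef
  set K : ℝ → ℝ := fun r => ε + τ * Real.log (1 + Real.exp (r / τ)) with hKdef
  have hupos : ∀ r : ℝ, (0:ℝ) < 1 + Real.exp (r / τ) := fun r => by positivity
  have hKge : ∀ r : ℝ, ε ≤ K r := by
    intro r
    have hl : 0 ≤ Real.log (1 + Real.exp (r / τ)) :=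
      Real.log_nonneg (by nlinarith [Real.exp_pos (r / τ)])
    simp only [hKdef]
    nlinarith
  have hKpos : ∀ r : ℝ, 0 < K r := fun r => lt_of_lt_of_le hε (hKge r)
  have hexpd : ∀ r : ℝ, HasDerivAt (fun r : ℝ => Real.exp (r / τ))
      (Real.exp (r / τ) * (1 / τ)) r := by
    intro r
    exact (Real.hasDerivAt_exp (r / τ)).comp r ((hasDerivAt_id r).div_const τ)
  have hKd : ∀ r : ℝ, HasDerivAt K (N r) r := by
    intro r
    have h1 : HasDerivAt (fun r : ℝ => 1 + Real.exp (r / τ))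
        (Real.exp (r / τ) * (1 / τ)) r := (hexpd r).const_add 1
    have h2 := ((h1.log (hupos r).ne').const_mul τ).const_add ε
    refine h2.congr_deriv ?_
    simp only [hNdef]
    field_simp
  have hNbd : ∀ r : ℝ, 0 ≤ N r ∧ N r ≤ 1 := by
    intro r
    constructor
    · positivity
    · rw [hNdef]
      rw [div_le_one (hupos r)]
      linarith
  have hhd : ∀ r : ℝ, HasDerivAt (fun r => Real.log (K r)) (N r / K r) r := by
    intro r
    exact (hKd r).log (hKpos r).ne'
  have hderiv1 : deriv (fun r => Real.log (K r)) = fun r => N r / K r :=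
    funext fun r => (hhd r).deriv
  have hNd : ∀ r : ℝ, HasDerivAt N
      (Real.exp (r / τ) / (τ * (1 + Real.exp (r / τ)) ^ 2)) r := by
    intro r
    have h1 : HasDerivAt (fun r : ℝ => 1 + Real.exp (r / τ))
        (Real.exp (r / τ) * (1 / τ)) r := (hexpd r).const_add 1
    have h2 := (hexpd r).div h1 (hupos r).ne'
    refine h2.congr_deriv ?_
    have := (hupos r).ne'
    field_simp
    ring
  have hgd : ∀ r : ℝ, HasDerivAt (fun r => N r / K r)
      ((Real.exp (r / τ) / (τ * (1 + Real.exp (r / τ)) ^ 2) * K r - N r * N r) / K r ^ 2)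
      r := fun r => (hNd r).div (hKd r) (hKpos r).ne'
  intro r
  refine ⟨(hhd r).differentiableAt, ?_, ?_, ?_⟩
  · rw [hderiv1]; exact (hgd r).differentiableAt
  · simp only [hderiv1]
    rw [abs_of_nonneg (div_nonneg (hNbd r).1 (hKpos r).le)]
    exact div_le_div₀ (by positivity) (hNbd r).2 hε (hKge r)
  · simp only [hderiv1]
    rw [(hgd r).deriv]
    set e := Real.exp (r / τ) with he
    have hepos : 0 < e := Real.exp_pos _
    have hN' : e / (τ * (1 + e) ^ 2) ≤ 1 / (4 * τ) := by
      rw [div_le_div_iff₀ (by positivity) (by positivity)]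
      nlinarith [mul_nonneg hτ.le (sq_nonneg (1 - e))]
    have hN'0 : 0 ≤ e / (τ * (1 + e) ^ 2) := by positivity
    have hK1 := hKge r
    have hK0 := hKpos r
    have hN0 := (hNbd r).1
    have hN1 := (hNbd r).2
    have habs : |(e / (τ * (1 + e) ^ 2) * K r - N r * N r) / K r ^ 2|
        ≤ (e / (τ * (1 + e) ^ 2) * K r + N r * N r) / K r ^ 2 := by
      rw [abs_div, abs_of_pos (by positivity : (0:ℝ) < K r ^ 2)]
      apply div_le_div_of_nonneg_right ?_ (by positivity) |>.trans_eq rfl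
      calc |e / (τ * (1 + e) ^ 2) * K r - N r * N r|
          ≤ |e / (τ * (1 + e) ^ 2) * K r| + |N r * N r| := abs_sub _ _
        _ = e / (τ * (1 + e) ^ 2) * K r + N r * N r := by
            rw [abs_of_nonneg (by positivity), abs_of_nonneg (by positivity)]
    refine habs.trans ?_
    have h1 : e / (τ * (1 + e) ^ 2) * K r / K r ^ 2 ≤ 1 / (4 * τ * ε) := by
      have heq : e / (τ * (1 + e) ^ 2) * K r / K r ^ 2 = e / (τ * (1 + e) ^ 2) / K r := by
        field_simp
      rw [heq]
      calc e / (τ * (1 + e) ^ 2) / K r ≤ (1 / (4 * τ)) / ε :=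
            div_le_div₀ (by positivity) hN' hε hK1
        _ = 1 / (4 * τ * ε) := by field_simp
    have h2 : N r * N r / K r ^ 2 ≤ 1 / ε ^ 2 := by
      apply div_le_div₀ (by norm_num) (by nlinarith) (by positivity)
      nlinarith
    calc (e / (τ * (1 + e) ^ 2) * K r + N r * N r) / K r ^ 2
        = e / (τ * (1 + e) ^ 2) * K r / K r ^ 2 + N r * N r / K r ^ 2 := by ring
      _ ≤ 1 / (4 * τ * ε) + 1 / ε ^ 2 := add_le_add h1 h2
end

section
/- (Lemma 1, Lipschitz part, coupling form.) Let U : ℝ^d → ℝ be differentiable with ∇U globally Lipschitz; let ξ : ℝ^d → ℝ^m be twice continuously differentiable with ∇ξ bounded and ∇²ξ bounded (equivalently, ∇ξ Lipschitz); let φ : ℝ^m → ℝ be twice continuously differentiable with φ, ∇φ, ∇²φ bounded; let γ, α, β, ε, τ > 0, and set h = log ∘ K_{τ,ε} with K_{τ,ε}(r) = ε + τ log(1 + exp(r/τ)). Define the drift b(x, μ) = −γ⁻¹ [ ∇U(x) + (α/β) ∇ξ(x)ᵀ h'(f_μ(ξ(x))) ∇f_μ(ξ(x)) ], where f_μ(z)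 = ∫ φ(z − ξ(y)) dμ(y). Then there exists a constant C > 0 such that for all x₁, x₂ ∈ ℝ^d, all probability measures μ₁, μ₂ on ℝ^d with finite second moment, and every coupling π of μ₁ and μ₂, ‖b(x₁, μ₁) − b(x₂, μ₂)‖ ≤ C ( ‖x₁ − x₂‖ + (∫ ‖y₁ − y₂‖² dπ(y₁, y₂))^{1/2} ). -/
open MeasureTheory

section AuxScalar
open Real

/-- sigmoid is 1-Lipschitz -/
lemma aux_sigmoid_lip (a c : ℝ) :
    |exp a / (1 + exp a) - exp c / (1 + exp c)| ≤ |a - c| := by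
  wlog hac : c ≤ a generalizing a c
  · rw [abs_sub_comm, abs_sub_comm a c]; exact this c a (le_of_not_ge hac)
  have hA : (0:ℝ) < exp a := exp_pos a
  have hC : (0:ℝ) < exp c := exp_pos c
  have hkey : exp a - exp c ≤ exp a * (a - c) := by
    have h1 : (c - a) + 1 ≤ exp (c - a) := add_one_le_exp _
    have h2 : exp (c - a) * exp a = exp c := by rw [← exp_add]; ring_nf
    nlinarith
  have hmono : exp c / (1 + exp c) ≤ exp a / (1 + exp a) := by
    rw [div_le_div_iff₀ (by linarith) (by linarith)]
    nlinarith [exp_le_exp.2 hac]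
  rw [abs_of_nonneg (by linarith), abs_of_nonneg (by linarith)]
  rw [div_sub_div _ _ (by positivity : (1:ℝ) + exp a ≠ 0) (by positivity : (1:ℝ) + exp c ≠ 0),
    div_le_iff₀ (by positivity)]
  nlinarith [mul_nonneg (sub_nonneg.2 hac) (by positivity : (0:ℝ) ≤ 1 + exp c + exp a * exp c)]

/-- softplus is 1-Lipschitz -/
lemma aux_softplus_lip (a c : ℝ) :
    |log (1 + exp a) - log (1 + exp c)| ≤ |a - c| := by
  wlog hac : c ≤ a generalizing a c
  · rw [abs_sub_comm, abs_sub_comm a c]; exact this c a (le_of_not_ge hac)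
  have hA : (0:ℝ) < exp a := exp_pos a
  have hC : (0:ℝ) < exp c := exp_pos c
  have hmono : log (1 + exp c) ≤ log (1 + exp a) := by
    apply log_le_log (by linarith)
    nlinarith [exp_le_exp.2 hac]
  have hup : log (1 + exp a) ≤ (a - c) + log (1 + exp c) := by
    have h1 : (1:ℝ) + exp a ≤ exp (a - c) * (1 + exp c) := by
      have h2 : exp (a - c) * exp c = exp a := by rw [← exp_add]; ring_nf
      have h3 : (1:ℝ) ≤ exp (a - c) := one_le_exp (by linarith)
      nlinarith
    calc log (1 + exp a) ≤ log (exp (a - c) * (1 + exp c)) := log_le_log (by linarith) h1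
      _ = (a - c) + log (1 + exp c) := by
          rw [log_mul (by positivity) (by positivity), log_exp]
  rw [abs_of_nonneg (by linarith), abs_of_nonneg (by linarith)]
  linarith

lemma aux_K_ge (ε τ : ℝ) (hε : 0 < ε) (hτ : 0 < τ) (r : ℝ) :
    ε ≤ ε + τ * log (1 + exp (r / τ)) := by
  have h1 : (0:ℝ) ≤ log (1 + exp (r / τ)) :=
    log_nonneg (by nlinarith [exp_pos (r / τ)])
  nlinarith

lemma aux_sigma_mem (u : ℝ) : 0 < exp u / (1 + exp u) ∧ exp u / (1 + exp u) ≤ 1 := by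
  have h := exp_pos u
  constructor
  · positivity
  · rw [div_le_one (by linarith)]; linarith

lemma aux_hasDerivAt_h (ε τ : ℝ) (hε : 0 < ε) (hτ : 0 < τ) (r : ℝ) :
    HasDerivAt (fun r => log (ε + τ * log (1 + exp (r / τ))))
      ((exp (r / τ) / (1 + exp (r / τ))) / (ε + τ * log (1 + exp (r / τ)))) r := by
  have h1 : HasDerivAt (fun r : ℝ => r / τ) (1 / τ) r := (hasDerivAt_id r).div_const τ
  have h2 : HasDerivAt (fun r : ℝ => exp (r / τ)) (exp (r / τ) * (1 / τ)) r := h1.exp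
  have h3 : HasDerivAt (fun r : ℝ => 1 + exp (r / τ)) (exp (r / τ) * (1 / τ)) r := by
    exact h2.const_add 1
  have h4 : HasDerivAt (fun r : ℝ => log (1 + exp (r / τ)))
      ((exp (r / τ) * (1 / τ)) / (1 + exp (r / τ))) r :=
    h3.log (by positivity)
  have h5 : HasDerivAt (fun r : ℝ => ε + τ * log (1 + exp (r / τ)))
      (τ * ((exp (r / τ) * (1 / τ)) / (1 + exp (r / τ)))) r := by
    exact (h4.const_mul τ).const_add ε
  have h5' : HasDerivAt (fun r : ℝ => ε + τ * log (1 + exp (r / τ)))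
      (exp (r / τ) / (1 + exp (r / τ))) r := by
    convert h5 using 1
    field_simp
  exact h5'.log (by nlinarith [aux_K_ge ε τ hε hτ r])

lemma aux_div_diff_bound (s1 s2 k1 k2 ε Ls LK : ℝ) (hε : 0 < ε)
    (hk1 : ε ≤ k1) (hk2 : ε ≤ k2) (hs2 : |s2| ≤ 1)
    (hs : |s1 - s2| ≤ Ls) (hk : |k1 - k2| ≤ LK) :
    |s1 / k1 - s2 / k2| ≤ Ls / ε + LK / ε ^ 2 := by
  have hk1' : 0 < k1 := lt_of_lt_of_le hε hk1
  have hk2' : 0 < k2 := lt_of_lt_of_le hε hk2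
  have heq : s1 / k1 - s2 / k2 = (s1 - s2) / k1 + s2 * (k2 - k1) / (k1 * k2) := by
    field_simp; ring
  rw [heq]
  have h1 : |(s1 - s2) / k1| ≤ Ls / ε := by
    rw [abs_div, abs_of_pos hk1']
    exact div_le_div₀ (le_trans (abs_nonneg _) hs) hs hε hk1
  have h2 : |s2 * (k2 - k1) / (k1 * k2)| ≤ LK / ε ^ 2 := by
    rw [abs_div, abs_mul, abs_of_pos (by positivity : (0:ℝ) < k1 * k2)]
    have hnum : |s2| * |k2 - k1| ≤ LK := by
      calc |s2| * |k2 - k1| ≤ 1 * LK :=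
            mul_le_mul hs2 (by rwa [abs_sub_comm]) (abs_nonneg _) zero_le_one
        _ = LK := one_mul _
    exact div_le_div₀ (le_trans (abs_nonneg _) hk) hnum (by positivity) (by nlinarith)
  calc |(s1 - s2) / k1 + s2 * (k2 - k1) / (k1 * k2)|
      ≤ |(s1 - s2) / k1| + |s2 * (k2 - k1) / (k1 * k2)| := abs_add_le _ _
    _ ≤ Ls / ε + LK / ε ^ 2 := add_le_add h1 h2

lemma aux_abs_div_tau (τ r1 r2 : ℝ) (hτ : 0 < τ) : |r1 / τ - r2 / τ| = |r1 - r2| / τ := by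
  rw [div_sub_div_same, abs_div, abs_of_pos hτ]

lemma aux_hderiv_bound (ε τ : ℝ) (hε : 0 < ε) (hτ : 0 < τ) (r : ℝ) :
    |(exp (r / τ) / (1 + exp (r / τ))) / (ε + τ * log (1 + exp (r / τ)))| ≤ 1 / ε := by
  have hσ := aux_sigma_mem (r / τ)
  have hK := aux_K_ge ε τ hε hτ r
  rw [abs_div, abs_of_pos hσ.1, abs_of_pos (by linarith)]
  exact div_le_div₀ (by positivity) hσ.2 hε hK

lemma aux_hderiv_lip (ε τ : ℝ) (hε : 0 < ε) (hτ : 0 < τ) (r1 r2 : ℝ) :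
    |(exp (r1 / τ) / (1 + exp (r1 / τ))) / (ε + τ * log (1 + exp (r1 / τ)))
      - (exp (r2 / τ) / (1 + exp (r2 / τ))) / (ε + τ * log (1 + exp (r2 / τ)))|
      ≤ (1 / (ε * τ) + 1 / ε ^ 2) * |r1 - r2| := by
  have hs : |exp (r1 / τ) / (1 + exp (r1 / τ)) - exp (r2 / τ) / (1 + exp (r2 / τ))|
      ≤ |r1 - r2| / τ := by
    rw [← aux_abs_div_tau τ r1 r2 hτ]; exact aux_sigmoid_lip _ _
  have hk : |(ε + τ * log (1 + exp (r1 / τ))) - (ε + τ * log (1 + exp (r2 / τ)))|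
      ≤ |r1 - r2| := by
    have h1 : (ε + τ * log (1 + exp (r1 / τ))) - (ε + τ * log (1 + exp (r2 / τ)))
        = τ * (log (1 + exp (r1 / τ)) - log (1 + exp (r2 / τ))) := by ring
    rw [h1, abs_mul, abs_of_pos hτ]
    calc τ * |log (1 + exp (r1 / τ)) - log (1 + exp (r2 / τ))|
        ≤ τ * |r1 / τ - r2 / τ| :=
          mul_le_mul_of_nonneg_left (aux_softplus_lip _ _) hτ.le
      _ = |r1 - r2| := by rw [aux_abs_div_tau τ r1 r2 hτ]; field_simp
  have hb2 := (aux_sigma_mem (r2 / τ))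
  have := aux_div_diff_bound (exp (r1 / τ) / (1 + exp (r1 / τ)))
    (exp (r2 / τ) / (1 + exp (r2 / τ)))
    (ε + τ * log (1 + exp (r1 / τ))) (ε + τ * log (1 + exp (r2 / τ))) ε
    (|r1 - r2| / τ) (|r1 - r2|) hε (aux_K_ge ε τ hε hτ r1) (aux_K_ge ε τ hε hτ r2)
    (by rw [abs_of_pos hb2.1]; exact hb2.2) hs hk
  calc _ ≤ |r1 - r2| / τ / ε + |r1 - r2| / ε ^ 2 := this
    _ = (1 / (ε * τ) + 1 / ε ^ 2) * |r1 - r2| := by field_simp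

end AuxScalar

lemma aux_int_le_sqrt {α : Type*} [MeasurableSpace α] (ν : Measure α)
    [IsProbabilityMeasure ν] (g : α → ℝ) (hg : AEStronglyMeasurable g ν)
    (hgnn : ∀ x, 0 ≤ g x) (hg2 : Integrable (fun x => g x ^ 2) ν) :
    ∫ x, g x ∂ν ≤ Real.sqrt (∫ x, g x ^ 2 ∂ν) := by
  have hmem : MemLp g 2 ν := (memLp_two_iff_integrable_sq hg).2 hg2
  have hconj : (2:ℝ).HolderConjugate 2 := ⟨by norm_num, by norm_num, by norm_num⟩
  have hCS := integral_mul_le_Lp_mul_Lq_of_nonneg (μ := ν) hconj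
    (f := g) (g := fun _ => (1:ℝ))
    (Filter.Eventually.of_forall hgnn) (Filter.Eventually.of_forall fun _ => zero_le_one)
    (by simpa [ENNReal.ofReal_ofNat] using hmem)
    (by simpa [ENNReal.ofReal_ofNat] using memLp_const (μ := ν) (1:ℝ))
  simp only [mul_one, Real.one_rpow, integral_const, measure_univ, probReal_univ, ENNReal.toReal_one,
    smul_eq_mul, one_mul] at hCS
  have h2 : ∀ x, g x ^ (2:ℝ) = g x ^ (2:ℕ) := fun x => by
    rw [← Real.rpow_natCast (g x) 2]; norm_num
  calc ∫ x, g x ∂ν ≤ (∫ x, g x ^ (2:ℝ) ∂ν) ^ (1/(2:ℝ)) := by convert hCS using 3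
    _ = Real.sqrt (∫ x, g x ^ 2 ∂ν) := by
        rw [Real.sqrt_eq_rpow]
        congr 1
        exact integral_congr_ae (Filter.Eventually.of_forall fun x => h2 x)

lemma aux_assemble {E F : Type*} [NormedAddCommGroup E] [NormedSpace ℝ E]
    [NormedAddCommGroup F] [NormedSpace ℝ F]
    (γ a : ℝ) (hγ : 0 < γ) (ha : 0 < a)
    (gU1 gU2 : E) (B1 B2 : F →L[ℝ] E) (s1 s2 : ℝ) (v1 v2 : F)
    (T LU Lξ Cg Lh Lg Mp εi : ℝ)
    (hT : 0 ≤ T) (hεi : 0 ≤ εi) (hCg : 0 ≤ Cg) (hMp : 0 ≤ Mp)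
    (hLh : 0 ≤ Lh) (hLg : 0 ≤ Lg)
    (hgU : ‖gU1 - gU2‖ ≤ LU * T)
    (hB : ‖B1 - B2‖ ≤ Lξ * T) (hB2 : ‖B2‖ ≤ Mp)
    (hs1 : |s1| ≤ εi) (hs2 : |s2| ≤ εi) (hss : |s1 - s2| ≤ Lh * T)
    (hv1 : ‖v1‖ ≤ Cg) (hvv : ‖v1 - v2‖ ≤ Lg * T) :
    ‖(-(γ⁻¹) • (gU1 + a • B1 (s1 • v1))) - (-(γ⁻¹) • (gU2 + a • B2 (s2 • v2)))‖
      ≤ (γ⁻¹ * (LU + a * (Lξ * (εi * Cg) + Mp * (Lh * Cg + εi * Lg)))) * T := by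
  have hLξT : 0 ≤ Lξ * T := le_trans (norm_nonneg _) hB
  have hLhT : 0 ≤ Lh * T := mul_nonneg hLh hT
  have hLgT : 0 ≤ Lg * T := mul_nonneg hLg hT
  have hsv1 : ‖s1 • v1‖ ≤ εi * Cg := by
    rw [norm_smul, Real.norm_eq_abs]
    exact mul_le_mul hs1 hv1 (norm_nonneg _) hεi
  have hsv : ‖s1 • v1 - s2 • v2‖ ≤ (Lh * T) * Cg + εi * (Lg * T) := by
    have hid : s1 • v1 - s2 • v2 = (s1 - s2) • v1 + s2 • (v1 - v2) := by
      rw [sub_smul, smul_sub]; abel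
    calc ‖s1 • v1 - s2 • v2‖ ≤ ‖(s1 - s2) • v1‖ + ‖s2 • (v1 - v2)‖ := by
          rw [hid]; exact norm_add_le _ _
      _ = |s1 - s2| * ‖v1‖ + |s2| * ‖v1 - v2‖ := by
          rw [norm_smul, norm_smul, Real.norm_eq_abs, Real.norm_eq_abs]
      _ ≤ (Lh * T) * Cg + εi * (Lg * T) :=
          add_le_add (mul_le_mul hss hv1 (norm_nonneg _) hLhT)
            (mul_le_mul hs2 hvv (norm_nonneg _) hεi)
  have hX : ‖B1 (s1 • v1) - B2 (s2 • v2)‖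
      ≤ (Lξ * T) * (εi * Cg) + Mp * ((Lh * T) * Cg + εi * (Lg * T)) := by
    have hid : B1 (s1 • v1) - B2 (s2 • v2)
        = (B1 - B2) (s1 • v1) + B2 (s1 • v1 - s2 • v2) := by
      simp only [ContinuousLinearMap.sub_apply, map_sub, _root_.map_smul]; module
    calc ‖B1 (s1 • v1) - B2 (s2 • v2)‖
        ≤ ‖(B1 - B2) (s1 • v1)‖ + ‖B2 (s1 • v1 - s2 • v2)‖ := by
          rw [hid]; exact norm_add_le _ _
      _ ≤ ‖B1 - B2‖ * ‖s1 • v1‖ + ‖B2‖ * ‖s1 • v1 - s2 • v2‖ :=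
          add_le_add (ContinuousLinearMap.le_opNorm _ _) (ContinuousLinearMap.le_opNorm _ _)
      _ ≤ (Lξ * T) * (εi * Cg) + Mp * ((Lh * T) * Cg + εi * (Lg * T)) :=
          add_le_add (mul_le_mul hB hsv1 (norm_nonneg _) hLξT)
            (mul_le_mul hB2 hsv (norm_nonneg _) hMp)
  have hid2 : (-(γ⁻¹) • (gU1 + a • B1 (s1 • v1))) - (-(γ⁻¹) • (gU2 + a • B2 (s2 • v2)))
      = -(γ⁻¹) • ((gU1 - gU2) + a • (B1 (s1 • v1) - B2 (s2 • v2))) := by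
    module
  rw [hid2, norm_smul, norm_neg, Real.norm_eq_abs, abs_of_pos (inv_pos.2 hγ)]
  have hinner : ‖(gU1 - gU2) + a • (B1 (s1 • v1) - B2 (s2 • v2))‖
      ≤ LU * T + a * ((Lξ * T) * (εi * Cg) + Mp * ((Lh * T) * Cg + εi * (Lg * T))) := by
    calc ‖(gU1 - gU2) + a • (B1 (s1 • v1) - B2 (s2 • v2))‖
        ≤ ‖gU1 - gU2‖ + ‖a • (B1 (s1 • v1) - B2 (s2 • v2))‖ := norm_add_le _ _
      _ = ‖gU1 - gU2‖ + a * ‖B1 (s1 • v1) - B2 (s2 • v2)‖ := by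
          rw [norm_smul, Real.norm_eq_abs, abs_of_pos ha]
      _ ≤ LU * T + a * ((Lξ * T) * (εi * Cg) + Mp * ((Lh * T) * Cg + εi * (Lg * T))) :=
          add_le_add hgU (mul_le_mul_of_nonneg_left hX ha.le)
  calc γ⁻¹ * ‖(gU1 - gU2) + a • (B1 (s1 • v1) - B2 (s2 • v2))‖
      ≤ γ⁻¹ * (LU * T + a * ((Lξ * T) * (εi * Cg) + Mp * ((Lh * T) * Cg + εi * (Lg * T)))) :=
        mul_le_mul_of_nonneg_left hinner (inv_pos.2 hγ).le
    _ = (γ⁻¹ * (LU + a * (Lξ * (εi * Cg) + Mp * (Lh * Cg + εi * Lg)))) * T := by ring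
/-- **Lemma 1, Lipschitz part, coupling form.** Under the regularity
assumptions on `U`, `ξ`, `φ` and the Softplus regularizer `h = log ∘ K_{τ,ε}`, the drift
`b(x, μ) = −γ⁻¹ [∇U(x) + (α/β) ∇ξ(x)ᵀ h'(f_μ(ξ(x))) ∇f_μ(ξ(x))]` of the regularized
McKean–Vlasov dynamics satisfies: there exists `C > 0` such that for all `x₁, x₂`, all
probability measures `μ₁, μ₂` with finite second moment and every coupling `π` of
`μ₁, μ₂`, `‖b(x₁,μ₁) − b(x₂,μ₂)‖ ≤ C (‖x₁ − x₂‖ + (∫ ‖y₁ − y₂‖² dπ)^{1/2})`. -/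
theorem drift_lipschitz_coupling_form
    (d m : ℕ) (γ α β ε τ : ℝ)
    (hγ : 0 < γ) (hα : 0 < α) (hβ : 0 < β) (hε : 0 < ε) (hτ : 0 < τ)
    (U : EuclideanSpace ℝ (Fin d) → ℝ)
    (hU : Differentiable ℝ U)
    (hU_lip : ∃ L : ℝ, ∀ x₁ x₂, ‖gradient U x₁ - gradient U x₂‖ ≤ L * ‖x₁ - x₂‖)
    (ξ : EuclideanSpace ℝ (Fin d) → EuclideanSpace ℝ (Fin m))
    (hξ : ContDiff ℝ 2 ξ)
    (hξ_bdd : ∃ M : ℝ, ∀ x, ‖fderiv ℝ ξ x‖ ≤ M)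
    (hξ_lip : ∃ L : ℝ, ∀ x₁ x₂, ‖fderiv ℝ ξ x₁ - fderiv ℝ ξ x₂‖ ≤ L * ‖x₁ - x₂‖)
    (φ : EuclideanSpace ℝ (Fin m) → ℝ)
    (hφ : ContDiff ℝ 2 φ)
    (hφ_bdd : ∃ C : ℝ, ∀ w, |φ w| ≤ C)
    (hφ_grad_bdd : ∃ C : ℝ, ∀ w, ‖gradient φ w‖ ≤ C)
    (hφ_grad_lip : ∃ C : ℝ, ∀ w₁ w₂, ‖gradient φ w₁ - gradient φ w₂‖ ≤ C * ‖w₁ - w₂‖)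
    (h : ℝ → ℝ)
    (hh : ∀ r : ℝ, h r = Real.log (ε + τ * Real.log (1 + Real.exp (r / τ))))
    (fμ : Measure (EuclideanSpace ℝ (Fin d)) → EuclideanSpace ℝ (Fin m) → ℝ)
    (hfμ : ∀ μ z, fμ μ z = ∫ y, φ (z - ξ y) ∂μ)
    (gradfμ : Measure (EuclideanSpace ℝ (Fin d)) → EuclideanSpace ℝ (Fin m) →
      EuclideanSpace ℝ (Fin m))
    (hgradfμ : ∀ μ z, gradfμ μ z = ∫ y, gradient φ (z - ξ y) ∂μ)
    (b : EuclideanSpace ℝ (Fin d) → Measure (EuclideanSpace ℝ (Fin d)) →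
      EuclideanSpace ℝ (Fin d))
    (hb : ∀ x μ, b x μ = -(γ⁻¹) •
      (gradient U x + (α / β) • ContinuousLinearMap.adjoint (fderiv ℝ ξ x)
        (deriv h (fμ μ (ξ x)) • gradfμ μ (ξ x)))) :
    ∃ C : ℝ, 0 < C ∧
      ∀ (x₁ x₂ : EuclideanSpace ℝ (Fin d))
        (μ₁ μ₂ : Measure (EuclideanSpace ℝ (Fin d))),
        IsProbabilityMeasure μ₁ → IsProbabilityMeasure μ₂ →
        Integrable (fun y => ‖y‖ ^ 2) μ₁ → Integrable (fun y => ‖y‖ ^ 2) μ₂ →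
        ∀ π : Measure (EuclideanSpace ℝ (Fin d) × EuclideanSpace ℝ (Fin d)),
          IsProbabilityMeasure π →
          π.map Prod.fst = μ₁ → π.map Prod.snd = μ₂ →
          Integrable (fun p => ‖p.1 - p.2‖ ^ 2) π →
          ‖b x₁ μ₁ - b x₂ μ₂‖
            ≤ C * (‖x₁ - x₂‖ + Real.sqrt (∫ p, ‖p.1 - p.2‖ ^ 2 ∂π)) := by
  obtain ⟨LU0, hLU0⟩ := hU_lip
  obtain ⟨M0, hM0⟩ := hξ_bdd
  obtain ⟨Lξ0, hLξ0⟩ := hξ_lip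
  obtain ⟨Cφ0, hCφ0⟩ := hφ_bdd
  obtain ⟨Cg0, hCg0⟩ := hφ_grad_bdd
  obtain ⟨Lg0, hLg0⟩ := hφ_grad_lip
  obtain ⟨LU, hLUnn, hLU⟩ :
      ∃ L, 0 ≤ L ∧ ∀ a c, ‖gradient U a - gradient U c‖ ≤ L * ‖a - c‖ :=
    ⟨max LU0 0, le_max_right _ _, fun a c =>
      le_trans (hLU0 a c) (mul_le_mul_of_nonneg_right (le_max_left _ _) (norm_nonneg _))⟩
  obtain ⟨M', hM'nn, hM'⟩ : ∃ Mv, 0 ≤ Mv ∧ ∀ x, ‖fderiv ℝ ξ x‖ ≤ Mv :=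
    ⟨max M0 0, le_max_right _ _, fun x => le_trans (hM0 x) (le_max_left _ _)⟩
  obtain ⟨Lξ', hLξ'nn, hLξ'⟩ :
      ∃ L, 0 ≤ L ∧ ∀ a c, ‖fderiv ℝ ξ a - fderiv ℝ ξ c‖ ≤ L * ‖a - c‖ :=
    ⟨max Lξ0 0, le_max_right _ _, fun a c =>
      le_trans (hLξ0 a c) (mul_le_mul_of_nonneg_right (le_max_left _ _) (norm_nonneg _))⟩
  obtain ⟨Cφ', hCφ'nn, hCφ'⟩ : ∃ Cv, 0 ≤ Cv ∧ ∀ w, |φ w| ≤ Cv :=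
    ⟨max Cφ0 0, le_max_right _ _, fun w => le_trans (hCφ0 w) (le_max_left _ _)⟩
  obtain ⟨Cg', hCg'nn, hCg'⟩ : ∃ Cv, 0 ≤ Cv ∧ ∀ w, ‖gradient φ w‖ ≤ Cv :=
    ⟨max Cg0 0, le_max_right _ _, fun w => le_trans (hCg0 w) (le_max_left _ _)⟩
  obtain ⟨Lg', hLg'nn, hLg'⟩ :
      ∃ L, 0 ≤ L ∧ ∀ a c, ‖gradient φ a - gradient φ c‖ ≤ L * ‖a - c‖ :=
    ⟨max Lg0 0, le_max_right _ _, fun a c =>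
      le_trans (hLg0 a c) (mul_le_mul_of_nonneg_right (le_max_left _ _) (norm_nonneg _))⟩
  have hξdiff : Differentiable ℝ ξ := hξ.differentiable (by norm_num)
  have hφdiff : Differentiable ℝ φ := hφ.differentiable (by norm_num)
  have hξlip : ∀ a c, ‖ξ a - ξ c‖ ≤ M' * ‖a - c‖ := fun a c =>
    Convex.norm_image_sub_le_of_norm_fderiv_le (fun x _ => hξdiff x) (fun x _ => hM' x)
      convex_univ (Set.mem_univ c) (Set.mem_univ a)
  have hfdφ : ∀ w, ‖fderiv ℝ φ w‖ ≤ Cg' := fun w => by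
    calc ‖fderiv ℝ φ w‖ = ‖gradient φ w‖ :=
          ((InnerProductSpace.toDual ℝ (EuclideanSpace ℝ (Fin m))).symm.norm_map
            (fderiv ℝ φ w)).symm
      _ ≤ Cg' := hCg' w
  have hφlip : ∀ a c, |φ a - φ c| ≤ Cg' * ‖a - c‖ := fun a c => by
    have := Convex.norm_image_sub_le_of_norm_fderiv_le (f := φ) (fun x _ => hφdiff x)
      (fun x _ => hfdφ x) convex_univ (Set.mem_univ c) (Set.mem_univ a)
    simpa [Real.norm_eq_abs] using this
  -- derivative of h
  have hfun : h = fun r => Real.log (ε + τ * Real.log (1 + Real.exp (r / τ))) := funext hh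
  have hD : ∀ r, deriv h r
      = (Real.exp (r / τ) / (1 + Real.exp (r / τ)))
        / (ε + τ * Real.log (1 + Real.exp (r / τ))) := fun r => by
    rw [hfun]; exact (aux_hasDerivAt_h ε τ hε hτ r).deriv
  have hDb : ∀ r, |deriv h r| ≤ 1 / ε := fun r => by
    rw [hD r]; exact aux_hderiv_bound ε τ hε hτ r
  have hDlip : ∀ r1 r2, |deriv h r1 - deriv h r2| ≤ (1 / (ε * τ) + 1 / ε ^ 2) * |r1 - r2| :=
    fun r1 r2 => by rw [hD r1, hD r2]; exact aux_hderiv_lip ε τ hε hτ r1 r2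
  set Lh0 : ℝ := 1 / (ε * τ) + 1 / ε ^ 2 with hLh0def
  have hLh0nn : 0 ≤ Lh0 := by rw [hLh0def]; positivity
  set C0 : ℝ := γ⁻¹ * (LU + (α / β) * (Lξ' * ((1 / ε) * Cg')
    + M' * ((Lh0 * (Cg' * M')) * Cg' + (1 / ε) * (Lg' * M')))) with hC0def
  have hC0nn : 0 ≤ C0 := by
    rw [hC0def]
    apply mul_nonneg (inv_nonneg.2 hγ.le)
    apply add_nonneg hLUnn
    apply mul_nonneg (div_nonneg hα.le hβ.le)
    apply add_nonneg
    · exact mul_nonneg hLξ'nn (mul_nonneg (by positivity) hCg'nn)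
    · exact mul_nonneg hM'nn (add_nonneg
        (mul_nonneg (mul_nonneg hLh0nn (mul_nonneg hCg'nn hM'nn)) hCg'nn)
        (mul_nonneg (by positivity) (mul_nonneg hLg'nn hM'nn)))
  refine ⟨C0 + 1, by linarith, ?_⟩
  intro x₁ x₂ μ₁ μ₂ hP1 hP2 hI1 hI2 π hPπ hmap1 hmap2 hπint
  have hξc : Continuous ξ := hξ.continuous
  have hφc : Continuous φ := hφ.continuous
  have hgradc : Continuous (gradient φ) := by
    have hL : LipschitzWith (Real.toNNReal Lg') (gradient φ) := by
      apply LipschitzWith.of_dist_le_mul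
      intro a c
      rw [dist_eq_norm, dist_eq_norm, Real.coe_toNNReal _ hLg'nn]
      exact hLg' a c
    exact hL.continuous
  -- integrability of the distance over the coupling
  have hmnorm : AEStronglyMeasurable
      (fun p : EuclideanSpace ℝ (Fin d) × EuclideanSpace ℝ (Fin d) => ‖p.1 - p.2‖) π :=
    ((continuous_fst.sub continuous_snd).norm).aestronglyMeasurable
  have hIn : Integrable (fun p : EuclideanSpace ℝ (Fin d) × EuclideanSpace ℝ (Fin d) =>
      ‖p.1 - p.2‖) π := by
    refine (hπint.add (integrable_const 1)).mono' hmnorm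
      (Filter.Eventually.of_forall fun p => ?_)
    rw [Real.norm_eq_abs, abs_of_nonneg (norm_nonneg _)]
    simp only [Pi.add_apply]
    nlinarith [sq_nonneg (‖p.1 - p.2‖ - 1), norm_nonneg (p.1 - p.2)]
  have hWS : ∫ p, ‖p.1 - p.2‖ ∂π ≤ Real.sqrt (∫ p, ‖p.1 - p.2‖ ^ 2 ∂π) :=
    aux_int_le_sqrt π _ hmnorm (fun p => norm_nonneg _) hπint
  have hW0 : 0 ≤ ∫ p, ‖p.1 - p.2‖ ∂π := integral_nonneg fun p => norm_nonneg _
  have hS0 : 0 ≤ Real.sqrt (∫ p, ‖p.1 - p.2‖ ^ 2 ∂π) := Real.sqrt_nonneg _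
  have hT0 : 0 ≤ ‖x₁ - x₂‖ + Real.sqrt (∫ p, ‖p.1 - p.2‖ ^ 2 ∂π) :=
    add_nonneg (norm_nonneg _) hS0
  -- integrability of compositions
  have hIφ1 : Integrable (fun p : EuclideanSpace ℝ (Fin d) × EuclideanSpace ℝ (Fin d) =>
      φ (ξ x₁ - ξ p.1)) π := by
    refine (integrable_const Cφ').mono'
      ((hφc.comp (continuous_const.sub (hξc.comp continuous_fst))).aestronglyMeasurable)
      (Filter.Eventually.of_forall fun p => ?_)
    simpa [Real.norm_eq_abs] using hCφ' (ξ x₁ - ξ p.1)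
  have hIφ2 : Integrable (fun p : EuclideanSpace ℝ (Fin d) × EuclideanSpace ℝ (Fin d) =>
      φ (ξ x₂ - ξ p.2)) π := by
    refine (integrable_const Cφ').mono'
      ((hφc.comp (continuous_const.sub (hξc.comp continuous_snd))).aestronglyMeasurable)
      (Filter.Eventually.of_forall fun p => ?_)
    simpa [Real.norm_eq_abs] using hCφ' (ξ x₂ - ξ p.2)
  have hIg1 : Integrable (fun p : EuclideanSpace ℝ (Fin d) × EuclideanSpace ℝ (Fin d) =>
      gradient φ (ξ x₁ - ξ p.1)) π := by
    refine (integrable_const Cg').mono'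
      ((hgradc.comp (continuous_const.sub (hξc.comp continuous_fst))).aestronglyMeasurable)
      (Filter.Eventually.of_forall fun p => hCg' (ξ x₁ - ξ p.1))
  have hIg2 : Integrable (fun p : EuclideanSpace ℝ (Fin d) × EuclideanSpace ℝ (Fin d) =>
      gradient φ (ξ x₂ - ξ p.2)) π := by
    refine (integrable_const Cg').mono'
      ((hgradc.comp (continuous_const.sub (hξc.comp continuous_snd))).aestronglyMeasurable)
      (Filter.Eventually.of_forall fun p => hCg' (ξ x₂ - ξ p.2))
  have hcφ1 : Continuous (fun y : EuclideanSpace ℝ (Fin d) => φ (ξ x₁ - ξ y)) := by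
    exact hφc.comp (continuous_const.sub hξc)
  have hcφ2 : Continuous (fun y : EuclideanSpace ℝ (Fin d) => φ (ξ x₂ - ξ y)) := by
    exact hφc.comp (continuous_const.sub hξc)
  have hcg1 : Continuous (fun y : EuclideanSpace ℝ (Fin d) => gradient φ (ξ x₁ - ξ y)) := by
    exact hgradc.comp (continuous_const.sub hξc)
  have hcg2 : Continuous (fun y : EuclideanSpace ℝ (Fin d) => gradient φ (ξ x₂ - ξ y)) := by
    exact hgradc.comp (continuous_const.sub hξc)
  -- marginal transfer
  have hfμ1 : fμ μ₁ (ξ x₁) = ∫ p, φ (ξ x₁ - ξ p.1) ∂π := by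
    rw [hfμ, ← hmap1, integral_map measurable_fst.aemeasurable hcφ1.aestronglyMeasurable]
  have hfμ2 : fμ μ₂ (ξ x₂) = ∫ p, φ (ξ x₂ - ξ p.2) ∂π := by
    rw [hfμ, ← hmap2, integral_map measurable_snd.aemeasurable hcφ2.aestronglyMeasurable]
  have hgμ1 : gradfμ μ₁ (ξ x₁) = ∫ p, gradient φ (ξ x₁ - ξ p.1) ∂π := by
    rw [hgradfμ, ← hmap1, integral_map measurable_fst.aemeasurable hcg1.aestronglyMeasurable]
  have hgμ2 : gradfμ μ₂ (ξ x₂) = ∫ p, gradient φ (ξ x₂ - ξ p.2) ∂π := by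
    rw [hgradfμ, ← hmap2, integral_map measurable_snd.aemeasurable hcg2.aestronglyMeasurable]
  -- bound on fμ difference
  have hbnd : ∀ c1 c2 : ℝ, 0 ≤ c1 → 0 ≤ c2 → Integrable
      (fun p : EuclideanSpace ℝ (Fin d) × EuclideanSpace ℝ (Fin d) =>
        c1 * c2 * (‖x₁ - x₂‖ + ‖p.1 - p.2‖)) π := fun c1 c2 _ _ =>
    ((integrable_const _).add hIn).const_mul _
  have hbint : ∀ c1 c2 : ℝ,
      ∫ p, c1 * c2 * (‖x₁ - x₂‖ + ‖p.1 - p.2‖) ∂π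
        = c1 * c2 * (‖x₁ - x₂‖ + ∫ p, ‖p.1 - p.2‖ ∂π) := fun c1 c2 => by
    rw [integral_const_mul, integral_add (integrable_const _) hIn, integral_const]
    simp
  have hptnorm : ∀ p : EuclideanSpace ℝ (Fin d) × EuclideanSpace ℝ (Fin d),
      ‖(ξ x₁ - ξ p.1) - (ξ x₂ - ξ p.2)‖ ≤ M' * ‖x₁ - x₂‖ + M' * ‖p.1 - p.2‖ := fun p => by
    calc ‖(ξ x₁ - ξ p.1) - (ξ x₂ - ξ p.2)‖ = ‖(ξ x₁ - ξ x₂) - (ξ p.1 - ξ p.2)‖ := by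
          congr 1; abel
      _ ≤ ‖ξ x₁ - ξ x₂‖ + ‖ξ p.1 - ξ p.2‖ := norm_sub_le _ _
      _ ≤ M' * ‖x₁ - x₂‖ + M' * ‖p.1 - p.2‖ := add_le_add (hξlip _ _) (hξlip _ _)
  have hΔf : |fμ μ₁ (ξ x₁) - fμ μ₂ (ξ x₂)|
      ≤ Cg' * M' * (‖x₁ - x₂‖ + ∫ p, ‖p.1 - p.2‖ ∂π) := by
    rw [hfμ1, hfμ2, ← integral_sub hIφ1 hIφ2]
    rw [← hbint Cg' M']
    rw [← Real.norm_eq_abs]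
    refine norm_integral_le_of_norm_le (hbnd Cg' M' hCg'nn hM'nn)
      (Filter.Eventually.of_forall fun p => ?_)
    rw [Real.norm_eq_abs]
    calc |φ (ξ x₁ - ξ p.1) - φ (ξ x₂ - ξ p.2)|
        ≤ Cg' * ‖(ξ x₁ - ξ p.1) - (ξ x₂ - ξ p.2)‖ := hφlip _ _
      _ ≤ Cg' * (M' * ‖x₁ - x₂‖ + M' * ‖p.1 - p.2‖) :=
          mul_le_mul_of_nonneg_left (hptnorm p) hCg'nn
      _ = Cg' * M' * (‖x₁ - x₂‖ + ‖p.1 - p.2‖) := by ring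
  have hΔv : ‖gradfμ μ₁ (ξ x₁) - gradfμ μ₂ (ξ x₂)‖
      ≤ Lg' * M' * (‖x₁ - x₂‖ + ∫ p, ‖p.1 - p.2‖ ∂π) := by
    rw [hgμ1, hgμ2, ← integral_sub hIg1 hIg2, ← hbint Lg' M']
    refine norm_integral_le_of_norm_le (hbnd Lg' M' hLg'nn hM'nn)
      (Filter.Eventually.of_forall fun p => ?_)
    calc ‖gradient φ (ξ x₁ - ξ p.1) - gradient φ (ξ x₂ - ξ p.2)‖
        ≤ Lg' * ‖(ξ x₁ - ξ p.1) - (ξ x₂ - ξ p.2)‖ := hLg' _ _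
      _ ≤ Lg' * (M' * ‖x₁ - x₂‖ + M' * ‖p.1 - p.2‖) :=
          mul_le_mul_of_nonneg_left (hptnorm p) hLg'nn
      _ = Lg' * M' * (‖x₁ - x₂‖ + ‖p.1 - p.2‖) := by ring
  have hv1 : ‖gradfμ μ₁ (ξ x₁)‖ ≤ Cg' := by
    rw [hgradfμ]
    calc ‖∫ y, gradient φ (ξ x₁ - ξ y) ∂μ₁‖ ≤ ∫ _y, Cg' ∂μ₁ :=
          norm_integral_le_of_norm_le (integrable_const _)
            (Filter.Eventually.of_forall fun y => hCg' (ξ x₁ - ξ y))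
      _ = Cg' := by simp
  -- assemble
  have hDT : ‖x₁ - x₂‖ ≤ ‖x₁ - x₂‖ + Real.sqrt (∫ p, ‖p.1 - p.2‖ ^ 2 ∂π) :=
    le_add_of_nonneg_right hS0
  have hWT : (‖x₁ - x₂‖ + ∫ p, ‖p.1 - p.2‖ ∂π)
      ≤ ‖x₁ - x₂‖ + Real.sqrt (∫ p, ‖p.1 - p.2‖ ^ 2 ∂π) := add_le_add (le_refl _) hWS
  rw [hb x₁ μ₁, hb x₂ μ₂]
  refine le_trans (aux_assemble γ (α / β) hγ (div_pos hα hβ)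
    (gradient U x₁) (gradient U x₂)
    (ContinuousLinearMap.adjoint (fderiv ℝ ξ x₁)) (ContinuousLinearMap.adjoint (fderiv ℝ ξ x₂))
    (deriv h (fμ μ₁ (ξ x₁))) (deriv h (fμ μ₂ (ξ x₂)))
    (gradfμ μ₁ (ξ x₁)) (gradfμ μ₂ (ξ x₂))
    (‖x₁ - x₂‖ + Real.sqrt (∫ p, ‖p.1 - p.2‖ ^ 2 ∂π))
    LU Lξ' Cg' (Lh0 * (Cg' * M')) (Lg' * M') M' (1 / ε)
    hT0 (by positivity) hCg'nn hM'nn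
    (mul_nonneg hLh0nn (mul_nonneg hCg'nn hM'nn)) (mul_nonneg hLg'nn hM'nn)
    ?_ ?_ ?_ (hDb _) (hDb _) ?_ hv1 ?_) ?_
  · exact le_trans (hLU x₁ x₂) (mul_le_mul_of_nonneg_left hDT hLUnn)
  · -- adjoint difference
    have hadj : ContinuousLinearMap.adjoint (fderiv ℝ ξ x₁)
        - ContinuousLinearMap.adjoint (fderiv ℝ ξ x₂)
        = ContinuousLinearMap.adjoint (fderiv ℝ ξ x₁ - fderiv ℝ ξ x₂) :=
      (map_sub (ContinuousLinearMap.adjoint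
        (E := EuclideanSpace ℝ (Fin d)) (F := EuclideanSpace ℝ (Fin m)) (𝕜 := ℝ)) _ _).symm
    rw [hadj, LinearIsometryEquiv.norm_map]
    exact le_trans (hLξ' x₁ x₂) (mul_le_mul_of_nonneg_left hDT hLξ'nn)
  · rw [LinearIsometryEquiv.norm_map]
    exact hM' x₂
  · -- scalar Lipschitz part
    calc |deriv h (fμ μ₁ (ξ x₁)) - deriv h (fμ μ₂ (ξ x₂))|
        ≤ Lh0 * |fμ μ₁ (ξ x₁) - fμ μ₂ (ξ x₂)| := hDlip _ _
      _ ≤ Lh0 * (Cg' * M' * (‖x₁ - x₂‖ + ∫ p, ‖p.1 - p.2‖ ∂π)) :=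
          mul_le_mul_of_nonneg_left hΔf hLh0nn
      _ ≤ Lh0 * (Cg' * M' * (‖x₁ - x₂‖ + Real.sqrt (∫ p, ‖p.1 - p.2‖ ^ 2 ∂π))) :=
          mul_le_mul_of_nonneg_left
            (mul_le_mul_of_nonneg_left hWT (mul_nonneg hCg'nn hM'nn)) hLh0nn
      _ = (Lh0 * (Cg' * M')) * (‖x₁ - x₂‖ + Real.sqrt (∫ p, ‖p.1 - p.2‖ ^ 2 ∂π)) := by ring
  · calc ‖gradfμ μ₁ (ξ x₁) - gradfμ μ₂ (ξ x₂)‖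
        ≤ Lg' * M' * (‖x₁ - x₂‖ + ∫ p, ‖p.1 - p.2‖ ∂π) := hΔv
      _ ≤ Lg' * M' * (‖x₁ - x₂‖ + Real.sqrt (∫ p, ‖p.1 - p.2‖ ^ 2 ∂π)) :=
          mul_le_mul_of_nonneg_left hWT (mul_nonneg hLg'nn hM'nn)
  · exact mul_le_mul_of_nonneg_right (by rw [hC0def]; linarith) hT0
end

section
/- Let U : ℝ^d → ℝ and ξ : ℝ^d → ℝ^m be measurable, let β > 0 and α ≥ 0, and assume Z = ∫ exp(−βU(x)) dx ∈ (0, ∞). Let π = Z⁻¹ exp(−βU(x)) dx, and assume the pushforward ξ_#π has a density ρ_ξ with respect to Lebesgue measure on ℝ^m with ρ_ξ(z) > 0 for (Lebesgue-) almost every z; set A(z) = −β⁻¹ log ρ_ξ(z). Assume further that Z_α = ∫ exp(−β(U(x) − (α/(α+1)) A(ξ(x)))) dx ∈ (0, ∞), and let ρ*_α be the probability measure with density Z_α⁻¹ exp(−β(U(x) − (α/(α+1)) A(ξ(x)))) on ℝ^d. Then the pushforward ξ_# ρ*_α has a Lebesgue density on ℝ^m proportional to ρ_ξ(z)^{1/(1+α)}.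 -/
open MeasureTheory

lemma map_withDensity_comp' {X Y : Type*} [MeasurableSpace X] [MeasurableSpace Y]
    (μ : Measure X) {ξ : X → Y} (hξ : Measurable ξ) {h : Y → ENNReal} (hh : Measurable h) :
    (μ.withDensity (fun x => h (ξ x))).map ξ = (μ.map ξ).withDensity h := by
  ext s hs
  rw [Measure.map_apply hξ hs, withDensity_apply _ (hξ hs), withDensity_apply _ hs,
    setLIntegral_map hs hh hξ]

/-- **flattening of the CV marginal of the minimizer.** Let
`π ∝ exp(−βU)dx` be the Gibbs measure whose collective-variable marginal `ξ_#π` has a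
(Lebesgue-a.e. positive) density `ρ_ξ`, let `A = −β⁻¹ log ρ_ξ` be the free energy, and
let `ρ*_α ∝ exp(−β(U − (α/(α+1)) A∘ξ))` (assumed normalizable). Then the pushforward
`ξ_# ρ*_α` has a Lebesgue density proportional to `ρ_ξ^{1/(1+α)}`. -/
theorem cv_marginal_of_entropy_penalized_minimizer
    (d m : ℕ) (β α : ℝ) (hβ : 0 < β) (hα : 0 ≤ α)
    (U : EuclideanSpace ℝ (Fin d) → ℝ) (hU : Measurable U)
    (ξ : EuclideanSpace ℝ (Fin d) → EuclideanSpace ℝ (Fin m)) (hξ : Measurable ξ)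
    (hZ_int : Integrable (fun x => Real.exp (-β * U x)))
    (hZ_pos : 0 < ∫ x, Real.exp (-β * U x))
    (π : Measure (EuclideanSpace ℝ (Fin d)))
    (hπ : π = (ENNReal.ofReal (∫ x, Real.exp (-β * U x)))⁻¹ •
      volume.withDensity (fun x => ENNReal.ofReal (Real.exp (-β * U x))))
    (ρξ : EuclideanSpace ℝ (Fin m) → ℝ) (hρξ_meas : Measurable ρξ)
    (hρξ_pos : ∀ᵐ z : EuclideanSpace ℝ (Fin m), 0 < ρξ z)
    -- `ξ_#π` has Lebesgue density `ρ_ξ`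
    (hmarg : π.map ξ = volume.withDensity (fun z => ENNReal.ofReal (ρξ z)))
    (A : EuclideanSpace ℝ (Fin m) → ℝ)
    (hA : ∀ z, A z = -β⁻¹ * Real.log (ρξ z))
    -- `Z_α` is finite and strictly positive
    (hZα_int : Integrable (fun x => Real.exp (-β * (U x - α / (α + 1) * A (ξ x)))))
    (hZα_pos : 0 < ∫ x, Real.exp (-β * (U x - α / (α + 1) * A (ξ x))))
    (ρα : Measure (EuclideanSpace ℝ (Fin d)))
    (hρα : ρα = (ENNReal.ofReal
        (∫ x, Real.exp (-β * (U x - α / (α + 1) * A (ξ x)))))⁻¹ •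
      volume.withDensity
        (fun x => ENNReal.ofReal (Real.exp (-β * (U x - α / (α + 1) * A (ξ x)))))) :
    ∃ c : ℝ, 0 < c ∧
      ρα.map ξ = volume.withDensity
        (fun z => ENNReal.ofReal (c * ρξ z ^ ((1 : ℝ) / (1 + α)))) := by
  have hα1 : (0:ℝ) < α + 1 := by linarith
  set Z := ∫ x, Real.exp (-β * U x) with hZdef
  set Zα := ∫ x, Real.exp (-β * (U x - α / (α + 1) * A (ξ x))) with hZαdef
  set w : EuclideanSpace ℝ (Fin m) → ENNReal :=
    fun z => ENNReal.ofReal (Real.exp (-(α / (α + 1)) * Real.log (ρξ z))) with hw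
  have hw_meas : Measurable w := by
    apply ENNReal.measurable_ofReal.comp
    exact (Real.measurable_exp.comp ((Real.measurable_log.comp hρξ_meas).const_mul _))
  have hf_meas : Measurable fun x => ENNReal.ofReal (Real.exp (-β * U x)) :=
    ENNReal.measurable_ofReal.comp (Real.measurable_exp.comp (hU.const_mul _))
  have hρξ'_meas : Measurable fun z => ENNReal.ofReal (ρξ z) :=
    ENNReal.measurable_ofReal.comp hρξ_meas
  have hsplit : (fun x => ENNReal.ofReal (Real.exp (-β * (U x - α / (α + 1) * A (ξ x)))))
      = fun x => ENNReal.ofReal (Real.exp (-β * U x)) * w (ξ x) := by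
    funext x
    rw [hw, ← ENNReal.ofReal_mul (Real.exp_nonneg _), ← Real.exp_add]
    congr 1
    rw [hA]
    field_simp
    ring
  have hZ_pos' : (0:ENNReal) < ENNReal.ofReal Z := ENNReal.ofReal_pos.2 hZ_pos
  have hZα_pos' : (0:ENNReal) < ENNReal.ofReal Zα := ENNReal.ofReal_pos.2 hZα_pos
  -- the pushforward of the unnormalized Gibbs measure
  have hpush : (volume.withDensity (fun x => ENNReal.ofReal (Real.exp (-β * U x)))).map ξ
      = ENNReal.ofReal Z • volume.withDensity (fun z => ENNReal.ofReal (ρξ z)) := by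
    rw [← hmarg, hπ, Measure.map_smul, smul_smul,
      ENNReal.mul_inv_cancel hZ_pos'.ne' ENNReal.ofReal_ne_top, one_smul]
  refine ⟨Z / Zα, div_pos hZ_pos hZα_pos, ?_⟩
  have hwξ_meas : Measurable fun x => w (ξ x) := hw_meas.comp hξ
  have hcoef : ENNReal.ofReal (Z / Zα) = (ENNReal.ofReal Zα)⁻¹ * ENNReal.ofReal Z := by
    rw [ENNReal.ofReal_div_of_pos hZα_pos, div_eq_mul_inv, mul_comm]
  calc ρα.map ξ
      = ((ENNReal.ofReal Zα)⁻¹ •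
          volume.withDensity
            (fun x => ENNReal.ofReal (Real.exp (-β * U x)) * w (ξ x))).map ξ := by
        rw [hρα, hsplit]
    _ = (ENNReal.ofReal Zα)⁻¹ •
          ((volume.withDensity (fun x => ENNReal.ofReal (Real.exp (-β * U x)))).withDensity
            (fun x => w (ξ x))).map ξ := by
        rw [Measure.map_smul, ← withDensity_mul _ hf_meas hwξ_meas]
        rfl
    _ = (ENNReal.ofReal Zα)⁻¹ •
          (ENNReal.ofReal Z •
            volume.withDensity (fun z => ENNReal.ofReal (ρξ z))).withDensity w := by
        rw [map_withDensity_comp' _ hξ hw_meas, hpush]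
    _ = ((ENNReal.ofReal Zα)⁻¹ * ENNReal.ofReal Z) •
          volume.withDensity (fun z => ENNReal.ofReal (ρξ z) * w z) := by
        rw [withDensity_smul_measure, smul_smul, ← withDensity_mul _ hρξ'_meas hw_meas]
        rfl
    _ = volume.withDensity
          (fun z => ENNReal.ofReal (Z / Zα) * (ENNReal.ofReal (ρξ z) * w z)) := by
        rw [hcoef, ← withDensity_smul _ (f := fun z => ENNReal.ofReal (ρξ z) * w z)
          (hρξ'_meas.mul hw_meas)]
        rfl
    _ = volume.withDensity (fun z => ENNReal.ofReal (Z / Zα * ρξ z ^ ((1:ℝ) / (1 + α)))) := by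
        apply withDensity_congr_ae
        filter_upwards [hρξ_pos] with z hz
        have h1 : w z = ENNReal.ofReal (ρξ z ^ (-(α / (α + 1)))) := by
          rw [hw]
          congr 1
          rw [Real.rpow_def_of_pos hz, mul_comm]
        have hexp : (1:ℝ) / (1 + α) = 1 + -(α / (α + 1)) := by
          field_simp
          ring
        have h2 : ρξ z * ρξ z ^ (-(α / (α + 1))) = ρξ z ^ ((1:ℝ) / (1 + α)) := by
          rw [hexp, Real.rpow_add hz, Real.rpow_one]
        rw [h1, ← ENNReal.ofReal_mul hz.le, h2,
          ← ENNReal.ofReal_mul (div_pos hZ_pos hZα_pos).le]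
end
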